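/- For positive integers m, s, d: if C(m,s) · 2^{1 - C(s,2)} · |FD_s(d)| < 1, where |FD_s(d)| is the number of labelled faithful unit distance graphs on s vertices in R^d, then R_FD(s,s,d) > m; i.e., there exists a graph G on m vertices such that neither G nor its complement contains an induced s-vertex subgraph isomorphic to a faithful distance graph in R^d. -/

import Mathlib

/-- A graph is realizable as a faithful unit distance graph in `ℝ^d`. -/
def FDRealizable {V : Type} (G : SimpleGraph V) (d : ℕ) : Prop :=
  ∃ f : V → EuclideanSpace ℝ (Fin d), Function.Injective f ∧
    ∀ u v, u ≠ v → (G.Adj u v ↔ dist (f u) (f v) = 1)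

open Finset in
lemma card_simpleGraph_ge (m : ℕ) :
    2 ^ (m.choose 2) ≤ Fintype.card (SimpleGraph (Fin m)) := by
  classical
  set P : Finset (Finset (Fin m)) := Finset.powersetCard 2 Finset.univ with hP
  have hmem : ∀ (u v : Fin m), u ≠ v → ({u, v} : Finset (Fin m)) ∈ P := by
    intro u v huv
    simp [hP, Finset.mem_powersetCard_univ, Finset.card_pair huv]
  let Φ : (↥P → Prop) → SimpleGraph (Fin m) := fun f =>
    { Adj := fun u v => ∃ h : u ≠ v, f ⟨{u, v}, hmem u v h⟩
      symm := by
        constructor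
        rintro u v ⟨h, hf⟩
        refine ⟨h.symm, ?_⟩
        have : (⟨{v, u}, hmem v u h.symm⟩ : ↥P) = ⟨{u, v}, hmem u v h⟩ :=
          Subtype.ext (Finset.pair_comm v u)
        rw [this]; exact hf
      loopless := by constructor; rintro u ⟨h, -⟩; exact h rfl }
  have hinj : Function.Injective Φ := by
    intro f g hfg
    funext e
    obtain ⟨u, v, huv, he⟩ := Finset.card_eq_two.mp (Finset.mem_powersetCard_univ.mp e.2)
    have he' : e = ⟨{u, v}, hmem u v huv⟩ := Subtype.ext he
    have h1 : (Φ f).Adj u v ↔ (Φ g).Adj u v := by rw [hfg]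
    simp only [Φ] at h1
    rw [he']
    have h2 : (∃ _ : u ≠ v, f ⟨{u, v}, hmem u v huv⟩) ↔
        (∃ _ : u ≠ v, g ⟨{u, v}, hmem u v huv⟩) := h1
    simp only [exists_prop, and_iff_right huv] at h2
    exact propext h2
  calc 2 ^ (m.choose 2) = Fintype.card (↥P → Prop) := by
        rw [Fintype.card_fun, Fintype.card_prop, Fintype.card_coe, hP,
          Finset.card_powersetCard, Finset.card_univ, Fintype.card_fin]
    _ ≤ _ := Fintype.card_le_of_injective Φ hinj

open Finset in
lemma filter_count (m s d : ℕ) (t : Finset (Fin m)) (ht : t.card = s) :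
    Nat.card {G : SimpleGraph (Fin m) // FDRealizable (G.induce (↑t : Set (Fin m))) d}
      ≤ Nat.card {H : SimpleGraph (Fin s) // FDRealizable H d}
          * 2 ^ (m.choose 2 - s.choose 2) := by
  classical
  set R : Finset (Finset (Fin m)) :=
    Finset.powersetCard 2 Finset.univ \ Finset.powersetCard 2 t with hR
  let e : ↥t ≃ Fin s := t.equivFinOfCardEq ht
  let Ht : SimpleGraph (Fin m) → SimpleGraph (Fin s) := fun G =>
    { Adj := fun i j => G.Adj (e.symm i : Fin m) (e.symm j : Fin m)
      symm := ⟨fun i j hij => G.adj_symm hij⟩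
      loopless := ⟨fun i hi => G.irrefl hi⟩ }
  have hHt : ∀ G : SimpleGraph (Fin m),
      FDRealizable (G.induce (↑t : Set (Fin m))) d → FDRealizable (Ht G) d := by
    rintro G ⟨f, hf, hfd⟩
    refine ⟨fun i => f ⟨(e.symm i : Fin m), by simp⟩, ?_, ?_⟩
    · intro i j hij
      have := hf hij
      exact e.symm.injective (Subtype.ext (congrArg Subtype.val this))
    · intro i j hij
      have hne : (⟨(e.symm i : Fin m), by simp⟩ :
          (↑t : Set (Fin m))) ≠ ⟨(e.symm j : Fin m), by simp⟩ := by
        intro hc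
        exact hij (e.symm.injective (Subtype.ext (congrArg Subtype.val hc)))
      have := hfd _ _ hne
      simpa [SimpleGraph.comap, Ht] using this
  let Φ : {G : SimpleGraph (Fin m) // FDRealizable (G.induce (↑t : Set (Fin m))) d} →
      {H : SimpleGraph (Fin s) // FDRealizable H d} × (↥R → Prop) :=
    fun ⟨G, hG⟩ => (⟨Ht G, hHt G hG⟩, fun p => ∃ u v, u ∈ p.1 ∧ v ∈ p.1 ∧ G.Adj u v)
  have hinj : Function.Injective Φ := by
    rintro ⟨G, hG⟩ ⟨G', hG'⟩ hGG'
    have h1 : Ht G = Ht G' := congrArg Subtype.val (congrArg Prod.fst hGG')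
    have h2 : ∀ p : ↥R, (∃ u v, u ∈ p.1 ∧ v ∈ p.1 ∧ G.Adj u v) =
        (∃ u v, u ∈ p.1 ∧ v ∈ p.1 ∧ G'.Adj u v) :=
      fun p => congrFun (congrArg Prod.snd hGG') p
    refine Subtype.ext ?_
    ext u v
    by_cases huv : u = v
    · subst huv; simp
    by_cases hut : u ∈ t ∧ v ∈ t
    · have := congrFun (congrFun (congrArg SimpleGraph.Adj h1) (e ⟨u, hut.1⟩)) (e ⟨v, hut.2⟩)
      simp only [Ht, Equiv.symm_apply_apply] at this
      exact iff_of_eq this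
    · have hpR : ({u, v} : Finset (Fin m)) ∈ R := by
        rw [hR, Finset.mem_sdiff]
        constructor
        · simp [Finset.mem_powersetCard_univ, Finset.card_pair huv]
        · intro hc
          have hsub := (Finset.mem_powersetCard.mp hc).1
          exact hut ⟨hsub (by simp), hsub (by simp)⟩
      have h3 := h2 ⟨{u, v}, hpR⟩
      have key : ∀ G'' : SimpleGraph (Fin m),
          (∃ a b, a ∈ ({u, v} : Finset (Fin m)) ∧ b ∈ ({u, v} : Finset (Fin m)) ∧ G''.Adj a b)
            ↔ G''.Adj u v := by
        intro G''
        constructor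
        · rintro ⟨a, b, ha, hb, hab⟩
          simp only [Finset.mem_insert, Finset.mem_singleton] at ha hb
          rcases ha with rfl | rfl <;> rcases hb with rfl | rfl
          · exact (hab.ne rfl).elim
          · exact hab
          · exact hab.symm
          · exact (hab.ne rfl).elim
        · intro hab; exact ⟨u, v, by simp, by simp, hab⟩
      rw [← key G, ← key G', h3]
  have hcard := Nat.card_le_card_of_injective Φ hinj
  have hRcard : R.card = m.choose 2 - s.choose 2 := by
    rw [hR, Finset.card_sdiff_of_subset (Finset.powersetCard_mono (Finset.subset_univ t)),
      Finset.card_powersetCard, Finset.card_powersetCard, Finset.card_univ,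
      Fintype.card_fin, ht]
  calc Nat.card {G : SimpleGraph (Fin m) // FDRealizable (G.induce (↑t : Set (Fin m))) d}
      ≤ _ := hcard
    _ = _ := by
        rw [Nat.card_prod, Nat.card_fun]
        congr 1
        rw [Nat.card_eq_fintype_card, Nat.card_eq_fintype_card, Fintype.card_prop,
          Fintype.card_coe, hRcard]

theorem stmt_14 (m s d : ℕ) (hm : 1 ≤ m) (hs : 1 ≤ s) (hd : 1 ≤ d)
    (h : (Nat.choose m s : ℝ) * (2 : ℝ) ^ ((1 : ℤ) - (Nat.choose s 2 : ℤ)) *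
        (Nat.card {G : SimpleGraph (Fin s) | FDRealizable G d} : ℝ) < 1) :
    ∃ G : SimpleGraph (Fin m),
      (¬ ∃ t : Finset (Fin m), t.card = s ∧ FDRealizable (G.induce (↑t : Set (Fin m))) d) ∧
      (¬ ∃ t : Finset (Fin m), t.card = s ∧ FDRealizable (Gᶜ.induce (↑t : Set (Fin m))) d) := by
  classical
  by_cases hsm : s ≤ m
  case neg =>
    refine ⟨⊥, ?_, ?_⟩ <;>
    · rintro ⟨t, htc, -⟩
      have := Finset.card_le_univ t
      rw [Fintype.card_fin] at this
      omega
  set N := Nat.card {H : SimpleGraph (Fin s) // FDRealizable H d} with hN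
  have hNset : (Nat.card {G : SimpleGraph (Fin s) | FDRealizable G d}) = N := rfl
  set bound := N * 2 ^ (m.choose 2 - s.choose 2) with hbound
  -- per-t bounds
  have hB1 : ∀ t ∈ Finset.powersetCard s (Finset.univ : Finset (Fin m)),
      (Finset.univ.filter (fun G : SimpleGraph (Fin m) =>
        FDRealizable (G.induce (↑t : Set (Fin m))) d)).card ≤ bound := by
    intro t ht
    have h1 := filter_count m s d t (Finset.mem_powersetCard_univ.mp ht)
    rwa [Nat.card_eq_fintype_card, Fintype.card_subtype] at h1
  have hB2 : ∀ t ∈ Finset.powersetCard s (Finset.univ : Finset (Fin m)),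
      (Finset.univ.filter (fun G : SimpleGraph (Fin m) =>
        FDRealizable (Gᶜ.induce (↑t : Set (Fin m))) d)).card ≤ bound := by
    intro t ht
    have hinj : Function.Injective (fun G : {G : SimpleGraph (Fin m) //
        FDRealizable (Gᶜ.induce (↑t : Set (Fin m))) d} =>
        (⟨(G : SimpleGraph (Fin m))ᶜ, G.2⟩ : {G : SimpleGraph (Fin m) //
          FDRealizable (G.induce (↑t : Set (Fin m))) d})) := by
      rintro ⟨G, hG⟩ ⟨G', hG'⟩ hGG'
      have h1 : Gᶜ = G'ᶜ := congrArg Subtype.val hGG'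
      exact Subtype.ext (compl_injective h1)
    have h2 := Nat.card_le_card_of_injective _ hinj
    have h3 := filter_count m s d t (Finset.mem_powersetCard_univ.mp ht)
    have h4 := le_trans h2 h3
    rwa [Nat.card_eq_fintype_card, Fintype.card_subtype] at h4
  set Bad : Finset (SimpleGraph (Fin m)) := Finset.univ.filter (fun G =>
    (∃ t : Finset (Fin m), t.card = s ∧ FDRealizable (G.induce (↑t : Set (Fin m))) d) ∨
    (∃ t : Finset (Fin m), t.card = s ∧ FDRealizable (Gᶜ.induce (↑t : Set (Fin m))) d))
    with hBad
  have hsub : Bad ⊆ ((Finset.powersetCard s Finset.univ).biUnion (fun t : Finset (Fin m) =>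
      Finset.univ.filter (fun G : SimpleGraph (Fin m) =>
        FDRealizable (G.induce (↑t : Set (Fin m))) d))) ∪
    ((Finset.powersetCard s Finset.univ).biUnion (fun t : Finset (Fin m) =>
      Finset.univ.filter (fun G : SimpleGraph (Fin m) =>
        FDRealizable (Gᶜ.induce (↑t : Set (Fin m))) d))) := by
    intro G hG
    simp only [hBad, Finset.mem_filter, Finset.mem_union, Finset.mem_biUnion,
      Finset.mem_powersetCard_univ, Finset.mem_univ, true_and] at hG ⊢
    rcases hG with ⟨t, ht, hr⟩ | ⟨t, ht, hr⟩
    · exact Or.inl ⟨t, ht, hr⟩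
    · exact Or.inr ⟨t, ht, hr⟩
  have hBadcard : Bad.card ≤ 2 * (m.choose s * bound) := by
    have c1 := Finset.card_biUnion_le_card_mul _ _ _ hB1
    have c2 := Finset.card_biUnion_le_card_mul _ _ _ hB2
    rw [Finset.card_powersetCard, Finset.card_univ, Fintype.card_fin] at c1 c2
    calc Bad.card ≤ _ := Finset.card_le_card hsub
      _ ≤ _ + _ := Finset.card_union_le _ _
      _ ≤ m.choose s * bound + m.choose s * bound := add_le_add c1 c2
      _ = 2 * (m.choose s * bound) := by ring
  -- arithmetic
  have harith : 2 * (m.choose s * bound) < 2 ^ m.choose 2 := by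
    have hb : s.choose 2 ≤ m.choose 2 := Nat.choose_le_choose 2 hsm
    have hbpos : (0:ℝ) < 2 ^ s.choose 2 := by positivity
    have hzpow : (2:ℝ) ^ ((1:ℤ) - (s.choose 2 : ℤ)) = 2 / 2 ^ s.choose 2 := by
      rw [zpow_sub₀ (by norm_num : (2:ℝ) ≠ 0), zpow_one, zpow_natCast, div_eq_mul_inv]
    rw [hNset, hzpow] at h
    have h1 : (m.choose s : ℝ) * 2 * N < 2 ^ s.choose 2 := by
      refine (div_lt_one hbpos).mp ?_
      calc (m.choose s : ℝ) * 2 * N / 2 ^ s.choose 2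
          = (m.choose s : ℝ) * (2 / 2 ^ s.choose 2) * N := by ring
        _ < 1 := h
    have hfin : (2:ℝ) * ((m.choose s : ℝ) * ((N:ℝ) * ((2:ℝ) ^ m.choose 2 / 2 ^ s.choose 2)))
        < 2 ^ m.choose 2 := by
      rw [show (2:ℝ) * ((m.choose s : ℝ) * ((N:ℝ) * ((2:ℝ) ^ m.choose 2 / 2 ^ s.choose 2)))
          = ((m.choose s : ℝ) * 2 * N) * 2 ^ m.choose 2 / 2 ^ s.choose 2 by ring,
        div_lt_iff₀ hbpos]
      calc ((m.choose s : ℝ) * 2 * N) * 2 ^ m.choose 2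
          < 2 ^ s.choose 2 * 2 ^ m.choose 2 :=
            mul_lt_mul_of_pos_right h1 (by positivity)
        _ = 2 ^ m.choose 2 * 2 ^ s.choose 2 := mul_comm _ _
    have hps : ((2:ℝ)) ^ (m.choose 2 - s.choose 2) = 2 ^ m.choose 2 / 2 ^ s.choose 2 := by
      rw [pow_sub₀ (2:ℝ) (by norm_num) hb, div_eq_mul_inv]
    have hreal : ((2 * (m.choose s * bound) : ℕ) : ℝ) < ((2 ^ m.choose 2 : ℕ) : ℝ) := by
      rw [hbound]
      push_cast
      rw [hps]
      convert hfin using 1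
    exact_mod_cast hreal
  have hlt : Bad.card < Fintype.card (SimpleGraph (Fin m)) :=
    lt_of_lt_of_le (lt_of_le_of_lt hBadcard harith) (card_simpleGraph_ge m)
  have hne : (Finset.univ \ Bad).Nonempty := by
    rw [← Finset.card_pos, Finset.card_sdiff_of_subset (Finset.subset_univ _), Finset.card_univ]
    omega
  obtain ⟨G, hG⟩ := hne
  rw [Finset.mem_sdiff] at hG
  refine ⟨G, ?_, ?_⟩
  · intro hc
    exact hG.2 (by rw [hBad, Finset.mem_filter]; exact ⟨Finset.mem_univ _, Or.inl hc⟩)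
  · intro hc
    exact hG.2 (by rw [hBad, Finset.mem_filter]; exact ⟨Finset.mem_univ _, Or.inr hc⟩)
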